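/- In the correlated-mistakes example, for every choice of transition matrices W^1,…,W^{101} over {0,1} all of whose entries are strictly positive, the expected log-likelihood of the Bayes posterior classifier h* is at most 100·log(1/2): Σ_{c,c' ∈ {0,1}} (1/4) · log( W^1_{c,c} · Π_{m=2}^{101} W^m_{c,c'} ) ≤ 100 · log(1/2). -/

import Mathlib

/-- A transition matrix over a finite class set `C`: nonnegative entries,
every row sums to 1. -/
def IsTransitionMatrix {C : Type*} [Fintype C] (W : C → C → ℝ) : Prop :=
  (∀ c c', 0 ≤ W c c') ∧ (∀ c, ∑ c', W c c' = 1)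

lemma log_add_log_le_two_log_half (a b : ℝ) (ha : 0 < a) (hb : 0 < b)
    (hab : a + b = 1) : Real.log a + Real.log b ≤ 2 * Real.log (1 / 2) := by
  have h : a * b ≤ (1 / 2 : ℝ) * (1 / 2) := by nlinarith [sq_nonneg (a - b)]
  calc Real.log a + Real.log b = Real.log (a * b) := (Real.log_mul ha.ne' hb.ne').symm
    _ ≤ Real.log ((1 / 2 : ℝ) * (1 / 2)) := Real.log_le_log (by positivity) h
    _ = 2 * Real.log (1 / 2) := by
        rw [Real.log_mul (by norm_num) (by norm_num)]; ring

/-- in the correlated-mistakes example, for any transition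
matrices `W^1, …, W^{101}` with strictly positive entries, the expected
log-likelihood of the Bayes posterior classifier is at most `100 log(1/2)`.
Expert 1 is `W 0` and expert `m ≥ 2` is `W m.succ` for `m : Fin 100`. -/
theorem bayes_loglik_le_hundred_log_half
    (W : Fin 101 → Fin 2 → Fin 2 → ℝ)
    (hW : ∀ m, IsTransitionMatrix (W m))
    (hWpos : ∀ m c c', 0 < W m c c') :
    ∑ c : Fin 2, ∑ c' : Fin 2,
        (1 / 4 : ℝ) * Real.log (W 0 c c * ∏ m : Fin 100, W m.succ c c') ≤
      100 * Real.log (1 / 2) := by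
  have expand : ∀ c c' : Fin 2, Real.log (W 0 c c * ∏ m : Fin 100, W m.succ c c')
      = Real.log (W 0 c c) + ∑ m : Fin 100, Real.log (W m.succ c c') := by
    intro c c'
    rw [Real.log_mul (hWpos 0 c c).ne'
        (Finset.prod_pos (fun m _ => hWpos m.succ c c')).ne',
      Real.log_prod (fun m _ => (hWpos m.succ c c').ne')]
  simp only [expand, Fin.sum_univ_two]
  -- W 0 diagonal entries are ≤ 1
  have hrow : ∀ m : Fin 101, ∀ c : Fin 2, W m c 0 + W m c 1 = 1 := by
    intro m c
    have := (hW m).2 c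
    rwa [Fin.sum_univ_two] at this
  have h00 : Real.log (W 0 0 0) ≤ 0 :=
    Real.log_nonpos ((hW 0).1 0 0) (by have := hrow 0 0; have := (hW 0).1 0 1; linarith)
  have h11 : Real.log (W 0 1 1) ≤ 0 :=
    Real.log_nonpos ((hW 0).1 1 1) (by have := hrow 0 1; have := (hW 0).1 1 0; linarith)
  have hm : ∀ m : Fin 100,
      Real.log (W m.succ 0 0) + Real.log (W m.succ 0 1)
        + (Real.log (W m.succ 1 0) + Real.log (W m.succ 1 1))
        ≤ 4 * Real.log (1 / 2) := by
    intro m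
    have h1 := log_add_log_le_two_log_half _ _ (hWpos m.succ 0 0) (hWpos m.succ 0 1)
      (hrow m.succ 0)
    have h2 := log_add_log_le_two_log_half _ _ (hWpos m.succ 1 0) (hWpos m.succ 1 1)
      (hrow m.succ 1)
    linarith
  have hS : ∑ m : Fin 100, (Real.log (W m.succ 0 0) + Real.log (W m.succ 0 1)
        + (Real.log (W m.succ 1 0) + Real.log (W m.succ 1 1)))
      ≤ 400 * Real.log (1 / 2) := by
    calc _ ≤ ∑ _m : Fin 100, (4 * Real.log (1 / 2)) :=
          Finset.sum_le_sum (fun m _ => hm m)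
      _ = 400 * Real.log (1 / 2) := by
          rw [Finset.sum_const]; simp; ring
  have hsplit : ∑ m : Fin 100, (Real.log (W m.succ 0 0) + Real.log (W m.succ 0 1)
        + (Real.log (W m.succ 1 0) + Real.log (W m.succ 1 1)))
      = (∑ m : Fin 100, Real.log (W m.succ 0 0))
        + (∑ m : Fin 100, Real.log (W m.succ 0 1))
        + ((∑ m : Fin 100, Real.log (W m.succ 1 0))
        + (∑ m : Fin 100, Real.log (W m.succ 1 1))) := by
    rw [Finset.sum_add_distrib, Finset.sum_add_distrib, Finset.sum_add_distrib]
  rw [hsplit] at hS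
  linarith
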